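/- arXiv:1906.09106 — 2 statements merged into one kernel-verified Lean document; each statement's English description precedes it below -/
import Mathlib

section
/- Let h: [0,∞) → [0,∞) be C² with h(0)=0, h'(0)=1, h ≥ 0, satisfying h'' = k·h where k: [0,∞) → [0,∞) is continuous with ∫₀^∞ s·k(s) ds < ∞. Then there exists a constant c₀ ≥ 1 such that r ≤ h(r) ≤ c₀ r for all r ≥ 0. -/
open MeasureTheory Set

private lemma gw_mono_aux (f f' : ℝ → ℝ) (hd : ∀ s, 0 ≤ s → HasDerivAt f (f' s) s)
    (hnn : ∀ s, 0 ≤ s → 0 ≤ f' s) : MonotoneOn f (Ici 0) := by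
  apply monotoneOn_of_deriv_nonneg (convex_Ici 0)
  · intro x hx; exact ((hd x hx).continuousAt).continuousWithinAt
  · intro x hx; rw [interior_Ici] at hx
    exact ((hd x hx.le).differentiableAt).differentiableWithinAt
  · intro x hx; rw [interior_Ici] at hx
    rw [(hd x hx.le).deriv]; exact hnn x hx.le

private lemma gw_anti_aux (f f' : ℝ → ℝ) (hd : ∀ s, 0 ≤ s → HasDerivAt f (f' s) s)
    (hnp : ∀ s, 0 ≤ s → f' s ≤ 0) : AntitoneOn f (Ici 0) := by
  apply antitoneOn_of_deriv_nonpos (convex_Ici 0)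
  · intro x hx; exact ((hd x hx).continuousAt).continuousWithinAt
  · intro x hx; rw [interior_Ici] at hx
    exact ((hd x hx.le).differentiableAt).differentiableWithinAt
  · intro x hx; rw [interior_Ici] at hx
    rw [(hd x hx.le).deriv]; exact hnp x hx.le

/-- Greene–Wu Jacobi-field comparison: if h ≥ 0 solves h'' = k·h, h(0) = 0,
h'(0) = 1, with k ≥ 0 continuous and ∫₀^∞ s·k(s) ds < ∞, then there is c₀ ≥ 1
with r ≤ h(r) ≤ c₀·r for all r ≥ 0. -/
theorem greene_wu_model_comparison (k h h' : ℝ → ℝ)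
    (hk_cont : ContinuousOn k (Ici 0))
    (hk_nonneg : ∀ s, 0 ≤ s → 0 ≤ k s)
    (hk_int : IntegrableOn (fun s => s * k s) (Ioi 0) volume)
    (hder1 : ∀ s, 0 ≤ s → HasDerivAt h (h' s) s)
    (hder2 : ∀ s, 0 ≤ s → HasDerivAt h' (k s * h s) s)
    (h0 : h 0 = 0) (h'0 : h' 0 = 1)
    (hpos : ∀ s, 0 ≤ s → 0 ≤ h s) :
    ∃ c₀ ≥ (1:ℝ), ∀ r, 0 ≤ r → r ≤ h r ∧ h r ≤ c₀ * r := by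
  -- extended coefficient
  set kt : ℝ → ℝ := fun s => k (max s 0) with hkt_def
  have hkt_cont : Continuous kt :=
    hk_cont.comp_continuous (continuous_id.max continuous_const) (fun x => mem_Ici.2 (le_max_right _ _))
  have hkt_eq : ∀ s, 0 ≤ s → kt s = k s := fun s hs => by
    simp [hkt_def, max_eq_left hs]
  -- h' is monotone
  have h'mono : MonotoneOn h' (Ici 0) :=
    gw_mono_aux h' (fun s => k s * h s) hder2
      (fun s hs => mul_nonneg (hk_nonneg s hs) (hpos s hs))
  have h'ge1 : ∀ r, 0 ≤ r → 1 ≤ h' r := by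
    intro r hr
    have := h'mono (self_mem_Ici) hr hr
    rwa [h'0] at this
  -- lower bound : r ≤ h r
  have lower : ∀ r, 0 ≤ r → r ≤ h r := by
    intro r hr
    have hmono : MonotoneOn (fun s => h s - s) (Ici 0) := by
      apply gw_mono_aux _ (fun s => h' s - 1)
      · intro s hs; exact (hder1 s hs).sub (hasDerivAt_id s)
      · intro s hs; linarith [h'ge1 s hs]
    have := hmono self_mem_Ici hr hr
    simpa [h0] using this
  -- convexity bound : h r ≤ r * h' r
  have hconv : ∀ r, 0 ≤ r → h r ≤ r * h' r := by
    intro r hr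
    have hmono : MonotoneOn (fun s => s * h' s - h s) (Ici 0) := by
      apply gw_mono_aux _ (fun s => s * (k s * h s))
      · intro s hs
        have hthis := ((hasDerivAt_id s).mul (hder2 s hs)).sub (hder1 s hs)
        have heq : 1 * h' s + id s * (k s * h s) - h' s = s * (k s * h s) := by
          simp only [id]; ring
        rw [heq] at hthis; exact hthis
      · intro s hs
        exact mul_nonneg hs (mul_nonneg (hk_nonneg s hs) (hpos s hs))
    have := hmono self_mem_Ici hr hr
    simp only [zero_mul, h0, sub_zero, zero_sub, neg_zero] at this
    linarith
  -- the integral function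
  set K : ℝ → ℝ := fun r => ∫ t in (0:ℝ)..r, t * kt t with hK_def
  have hint_cont : Continuous (fun t => t * kt t) := continuous_id.mul hkt_cont
  have hK_deriv : ∀ r : ℝ, HasDerivAt K (r * kt r) r := by
    intro r
    exact intervalIntegral.integral_hasDerivAt_right
      (hint_cont.intervalIntegrable 0 r)
      (hint_cont.stronglyMeasurableAtFilter volume (nhds r))
      hint_cont.continuousAt
  have hK0 : K 0 = 0 := by simp [hK_def]
  set Kinf : ℝ := ∫ s in Ioi (0:ℝ), s * k s with hKinf_def
  have hKinf_nonneg : 0 ≤ Kinf := by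
    apply setIntegral_nonneg measurableSet_Ioi
    intro s hs
    exact mul_nonneg (le_of_lt hs) (hk_nonneg s (le_of_lt hs))
  have hK_le : ∀ r, 0 ≤ r → K r ≤ Kinf := by
    intro r hr
    have h1 : K r = ∫ t in Ioc (0:ℝ) r, t * k t := by
      show (∫ t in (0:ℝ)..r, t * kt t) = _
      rw [intervalIntegral.integral_of_le hr]
      apply setIntegral_congr_fun measurableSet_Ioc
      intro t ht
      show t * kt t = t * k t
      rw [hkt_eq t ht.1.le]
    rw [h1, hKinf_def]
    apply setIntegral_mono_set hk_int
    · exact (ae_restrict_iff' measurableSet_Ioi).2 (Filter.Eventually.of_forall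
        (fun s hs => mul_nonneg (le_of_lt hs) (hk_nonneg s (le_of_lt hs))))
    · exact HasSubset.Subset.eventuallyLE Ioc_subset_Ioi_self
  -- Gronwall : h' r ≤ exp (K r)
  have hF : ∀ r, 0 ≤ r → h' r ≤ Real.exp (K r) := by
    intro r hr
    have hanti : AntitoneOn (fun s => h' s * Real.exp (-K s)) (Ici 0) := by
      apply gw_anti_aux _
        (fun s => (k s * h s) * Real.exp (-K s) + h' s * (Real.exp (-K s) * -(s * kt s)))
      · intro s hs
        exact (hder2 s hs).mul (((hK_deriv s).neg).exp)
      · intro s hs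
        have heq : (k s * h s) * Real.exp (-K s) + h' s * (Real.exp (-K s) * -(s * kt s))
            = Real.exp (-K s) * (k s * (h s - s * h' s)) := by
          rw [hkt_eq s hs]; ring
        rw [heq]
        apply mul_nonpos_of_nonneg_of_nonpos (Real.exp_nonneg _)
        apply mul_nonpos_of_nonneg_of_nonpos (hk_nonneg s hs)
        linarith [hconv s hs]
    have := hanti self_mem_Ici hr hr
    simp only [hK0, neg_zero, Real.exp_zero, mul_one, h'0] at this
    calc h' r = h' r * Real.exp (-K r) * Real.exp (K r) := by
          rw [mul_assoc, ← Real.exp_add]; simp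
      _ ≤ 1 * Real.exp (K r) :=
          mul_le_mul_of_nonneg_right this (Real.exp_nonneg _)
      _ = Real.exp (K r) := one_mul _
  refine ⟨Real.exp Kinf, Real.one_le_exp hKinf_nonneg, fun r hr => ⟨lower r hr, ?_⟩⟩
  -- upper bound via c₀ - h' ≥ 0
  have h'le : ∀ s, 0 ≤ s → h' s ≤ Real.exp Kinf :=
    fun s hs => (hF s hs).trans (Real.exp_le_exp.2 (hK_le s hs))
  have hmono : MonotoneOn (fun s => Real.exp Kinf * s - h s) (Ici 0) := by
    apply gw_mono_aux _ (fun s => Real.exp Kinf - h' s)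
    · intro s hs
      exact (((hasDerivAt_id s).const_mul (Real.exp Kinf)).sub (hder1 s hs)).congr_deriv (by simp)
    · intro s hs; linarith [h'le s hs]
  have := hmono self_mem_Ici hr hr
  simp only [mul_zero, h0, sub_zero] at this
  linarith
end

section
/- The map F: C → M₂(C) given by F(z) = [[z+1, -z],[z, -z+1]] takes values in SL(2,C), is holomorphic with det(F'(z)) = 0 for all z, yet the Hermitian-matrix-valued derivative d(F e₃ F*)/coordinates has det[d(F e₃ F*)] identically zero, i.e. the induced symmetric (0,2)-tensor -det[d(Fe₃F*)] vanishes identically on C. -/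
open Matrix Complex

/-- The paper's counterexample: F(z) = [[z+1, -z],[z, -z+1]]. -/
noncomputable def Fcex (z : ℂ) : Matrix (Fin 2) (Fin 2) ℂ :=
  !![z + 1, -z; z, -z + 1]

/-- e₃ = diag(1,-1). -/
noncomputable def e₃cex : Matrix (Fin 2) (Fin 2) ℂ := !![1, 0; 0, -1]

/-- The map f = F e₃ F* : ℂ ≅ ℝ² → Herm(2). -/
noncomputable def fcex (x y : ℝ) : Matrix (Fin 2) (Fin 2) ℂ :=
  Fcex (x + y * Complex.I) * e₃cex * (Fcex (x + y * Complex.I))ᴴ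

/-- Partial derivative of fcex in the x-direction. -/
noncomputable def fcex_x (x y : ℝ) : Matrix (Fin 2) (Fin 2) ℂ :=
  Matrix.of fun i j => deriv (fun t => fcex t y i j) x

/-- Partial derivative of fcex in the y-direction. -/
noncomputable def fcex_y (x y : ℝ) : Matrix (Fin 2) (Fin 2) ℂ :=
  Matrix.of fun i j => deriv (fun t => fcex x t i j) y

lemma fcex_eq (x y : ℝ) :
    fcex x y = !![2*(x:ℂ)+1, 2*x; 2*x, 2*x-1] := by
  have hconj : (starRingEnd ℂ) ((x:ℂ) + y*Complex.I) = (x:ℂ) - y*Complex.I := by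
    simp [Complex.conj_ofReal, sub_eq_add_neg]
  ext i j
  fin_cases i <;> fin_cases j <;>
    simp [fcex, Fcex, e₃cex, Matrix.mul_apply, Fin.sum_univ_two, hconj,
      Matrix.conjTranspose_apply] <;>
    ring

lemma hasDerivAt_coe (t : ℝ) : HasDerivAt (fun s : ℝ => (s : ℂ)) 1 t := by
  simpa using (hasDerivAt_id t).ofReal_comp

lemma fcex_x_eq (x y : ℝ) : fcex_x x y = !![2, 2; 2, 2] := by
  have d1 : deriv (fun t : ℝ => 2*(t:ℂ)+1) x = 2 := by
    simpa using ((((hasDerivAt_coe x).const_mul (2:ℂ)).add_const 1).deriv)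
  have d2 : deriv (fun t : ℝ => 2*(t:ℂ)) x = 2 := by
    simpa using (((hasDerivAt_coe x).const_mul (2:ℂ)).deriv)
  have d3 : deriv (fun t : ℝ => 2*(t:ℂ)-1) x = 2 := by
    simpa using ((((hasDerivAt_coe x).const_mul (2:ℂ)).sub_const 1).deriv)
  ext i j
  fin_cases i <;> fin_cases j <;>
    simp [fcex_x, fcex_eq, d1, d2, d3]

lemma fcex_y_eq (x y : ℝ) : fcex_y x y = 0 := by
  ext i j
  fin_cases i <;> fin_cases j <;>
    simp [fcex_y, fcex_eq]

/-- F(z) = [[z+1,-z],[z,-z+1]] takes values in SL(2,ℂ), is holomorphic with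
det F'(z) = 0 everywhere, f = F e₃ F* is Hermitian-valued, yet the symmetric
(0,2)-tensor det[d(F e₃ F*)] vanishes identically: det(u·f_x + v·f_y) = 0 for
all directions (u,v). -/
theorem counterexample_degenerate :
    (∀ z : ℂ, (Fcex z).det = 1) ∧
    (∀ i j : Fin 2, Differentiable ℂ (fun z => Fcex z i j)) ∧
    (∀ z : ℂ, (Matrix.of fun i j => deriv (fun w => Fcex w i j) z).det = 0) ∧
    (∀ x y : ℝ, (fcex x y)ᴴ = fcex x y) ∧
    (∀ x y u v : ℝ, ((u : ℂ) • fcex_x x y + (v : ℂ) • fcex_y x y).det = 0) := by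
  refine ⟨fun z => ?_, fun i j => ?_, fun z => ?_, fun x y => ?_, fun x y u v => ?_⟩
  · simp [Fcex, Matrix.det_fin_two_of]; ring
  · fin_cases i <;> fin_cases j <;> simp [Fcex] <;> fun_prop
  · have h1 : ∀ z : ℂ, deriv (fun w : ℂ => w + 1) z = 1 := fun z => by
      simpa using ((hasDerivAt_id z).add_const 1).deriv
    have h2 : ∀ z : ℂ, deriv (fun w : ℂ => -w) z = -1 := fun z => by
      simpa using (hasDerivAt_id z).neg.deriv
    have h3 : ∀ z : ℂ, deriv (fun w : ℂ => -w + 1) z = -1 := fun z => by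
      simpa using ((hasDerivAt_id z).neg.add_const 1).deriv
    rw [Matrix.det_fin_two]
    simp [Fcex, h1, h2, h3, deriv_id']
  · rw [fcex_eq]
    ext i j
    fin_cases i <;> fin_cases j <;>
    · simp [Matrix.conjTranspose_apply]
  · rw [fcex_x_eq, fcex_y_eq]
    rw [Matrix.det_fin_two]
    simp
end
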